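/- For every i ∈ {1,…,n}, the skew pipe dream D(s_i) associated to the simple reflection s_i equals SY_n ∖ {(n−i+1, n+i−1)}, and no ladder move is defined on D(s_i), so L(D(s_i)) = {D(s_i)}. -/
import Mathlib


open scoped Classical

/-! ## The type `Cₙ` Weyl group as signed permutations of `ℤ` -/

/-- The simple reflections `s₁, …, sₙ` of the type `Cₙ` Weyl group, acting on `ℤ`:
`s₁ = (1 -1)` and `s_k = (k-1 k)(-(k-1) -k)` for `k ≥ 2`. -/
def sC (k : ℕ) : ℤ → ℤ := fun x =>
  if k = 1 then (if x = 1 then -1 else if x = -1 then 1 else x)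
  else
    if x = (k : ℤ) then (k : ℤ) - 1
    else if x = (k : ℤ) - 1 then (k : ℤ)
    else if x = -(k : ℤ) then -((k : ℤ) - 1)
    else if x = -((k : ℤ) - 1) then -(k : ℤ) else x

/-- A signed permutation of `{±1, …, ±n}`: a bijection of `ℤ` commuting with negation and
fixing every integer of absolute value `> n`. -/
def IsSignedPerm (n : ℕ) (w : ℤ → ℤ) : Prop :=
  Function.Bijective w ∧ (∀ x : ℤ, w (-x) = -(w x)) ∧ ∀ x : ℤ, n < x.natAbs → w x = x

/-- The product `s_{i₁} s_{i₂} ⋯ s_{i_r}` of the word `l = [i₁, …, i_r]`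
(applied to `ℤ` on the left, so `s_{i_r}` acts first). -/
def wordProd (l : List ℕ) : ℤ → ℤ := (l.map sC).foldr (· ∘ ·) id

/-- The length `ℓ(w)`: the minimal number of simple reflections `s₁, …, sₙ` needed
to express `w`. -/
noncomputable def lenC (n : ℕ) (w : ℤ → ℤ) : ℕ :=
  sInf {r | ∃ l : List ℕ, l.length = r ∧ (∀ k ∈ l, 1 ≤ k ∧ k ≤ n) ∧ wordProd l = w}

/-- `l` is a reduced word for `w` in the type `Cₙ` Weyl group. -/
def IsReducedWordC (n : ℕ) (w : ℤ → ℤ) (l : List ℕ) : Prop :=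
  (∀ k ∈ l, 1 ≤ k ∧ k ≤ n) ∧ wordProd l = w ∧ l.length = lenC n w

/-- The longest element `w₀ = (1 -1)(2 -2)⋯(n -n)`. -/
def w0C (n : ℕ) : ℤ → ℤ := fun x => if x.natAbs ≤ n then -x else x

/-- The block `(m, m-1, …, 2, 1, 2, …, m-1, m)` of length `2m-1`. -/
def cBlock (m : ℕ) : List ℕ :=
  ((List.range m).map (fun t => m - t)) ++ ((List.range (m - 1)).map (fun t => t + 2))

/-- The reduced word `i_C = (1, 2,1,2, 3,2,1,2,3, …, n,…,1,…,n)` for `w₀`, of length `n²`. -/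
def iC (n : ℕ) : List ℕ := ((List.range n).map (fun k => cBlock (k + 1))).flatten

/-- `m̂(w, i)`: the number of `j ∈ {±1,…,±n}` with `-(n-i+1) ≤ j < n-i+1` and
`w⁻¹(j) < w⁻¹(n-i+1)`. -/
noncomputable def mHat (n : ℕ) (w : ℤ → ℤ) (i : ℕ) : ℕ :=
  ((Finset.Icc (-(n : ℤ)) (n : ℤ)).filter fun j =>
      j ≠ 0 ∧ -((n : ℤ) - (i : ℤ) + 1) ≤ j ∧ j < (n : ℤ) - (i : ℤ) + 1 ∧
        Function.invFun w j < Function.invFun w ((n : ℤ) - (i : ℤ) + 1)).card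

/-! ## The shifted staircase `SY n` and ladder moves -/

/-- The shifted staircase `SY_n = {(i,j) : 1 ≤ i ≤ n, i ≤ j ≤ 2n-i}`. -/
def SY (n : ℕ) : Finset (ℕ × ℕ) :=
  (Finset.Icc 1 n ×ˢ Finset.Icc 1 (2 * n)).filter fun b => b.1 ≤ b.2 ∧ b.1 + b.2 ≤ 2 * n

/-- `idxLt a b` : the box `a` comes strictly before `b` in the enumeration
`((n,n), (n-1,n+1), (n-1,n), …, (1,2), (1,1))` of `SY_n`
(rows from bottom to top, and each row from right to left). -/
def idxLt (a b : ℕ × ℕ) : Prop := b.1 < a.1 ∨ (b.1 = a.1 ∧ b.2 < a.2)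

/-- The symplectic ladder move `L_{rem}` is defined on `D` removing the box `rem` and adding
the box `(add.1, add.2 + 1)`. -/
def LadderMovable (n : ℕ) (D : Finset (ℕ × ℕ)) (rem add : ℕ × ℕ) : Prop :=
  rem ∈ D ∧ (rem.1, rem.2 + 1) ∉ D ∧
  add ∈ SY n ∧ (add.1, add.2 + 1) ∈ SY n ∧ add ∉ D ∧ (add.1, add.2 + 1) ∉ D ∧
  idxLt rem add ∧ (add.2 = rem.2 ∨ add.2 = 2 * n - rem.2) ∧
  ∀ r ∈ SY n, idxLt rem r → idxLt r add → (r.2 = rem.2 ∨ r.2 = 2 * n - rem.2) →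
    r ∈ D ∧ (r.1, r.2 + 1) ∈ D

/-- The result `D ∪ {(add.1, add.2+1)} ∖ {rem}` of a ladder move. -/
def ladderResult (D : Finset (ℕ × ℕ)) (rem add : ℕ × ℕ) : Finset (ℕ × ℕ) :=
  insert (add.1, add.2 + 1) (D.erase rem)

/-- The inverse symplectic ladder move `L⁻¹_{rem}` is defined on `D`, removing the box `rem`
and adding the box `add`. -/
def InvLadderMovable (n : ℕ) (D : Finset (ℕ × ℕ)) (rem add : ℕ × ℕ) : Prop :=
  rem ∈ D ∧ (rem.1, rem.2 - 1) ∉ D ∧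
  add ∈ SY n ∧ add ∉ D ∧ (add.1, add.2 + 1) ∉ D ∧
  idxLt add rem ∧ (add.2 = rem.2 - 1 ∨ add.2 = 2 * n - rem.2 + 1) ∧
  ∀ r ∈ SY n, idxLt add r → idxLt r rem → (r.2 = rem.2 - 1 ∨ r.2 = 2 * n - rem.2 + 1) →
    r ∈ D ∧ (r.1, r.2 + 1) ∈ D

/-- The result `D ∪ {add} ∖ {rem}` of an inverse ladder move. -/
def invLadderResult (D : Finset (ℕ × ℕ)) (rem add : ℕ × ℕ) : Finset (ℕ × ℕ) :=
  insert add (D.erase rem)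

/-- One ladder move step. -/
def LadderStep (n : ℕ) (D D' : Finset (ℕ × ℕ)) : Prop :=
  ∃ rem add, LadderMovable n D rem add ∧ D' = ladderResult D rem add

/-- `D` is obtained from `D₀` by a (possibly empty) sequence of ladder moves. -/
def InLadderClosure (n : ℕ) (D₀ D : Finset (ℕ × ℕ)) : Prop :=
  Relation.ReflTransGen (LadderStep n) D₀ D

/-! ## The skew pipe dream `D(w)` -/

/-- The `k`-th box (`0`-based) in the enumeration
`((n,n), (n-1,n+1), (n-1,n), (n-1,n-1), …, (1,2n-1), …, (1,2), (1,1))` of `SY_n`. -/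
def boxOfIdx (n k : ℕ) : ℕ × ℕ :=
  let b := Nat.sqrt k + 1
  (n + 1 - b, n + b - 1 - (k - (b - 1) * (b - 1)))

/-- The letters of the subword of `i_C` at the (`0`-based) positions `ks`. -/
def subwordLetters (n : ℕ) (ks : List ℕ) : List ℕ := ks.map fun k => (iC n).getD k 0

/-- `ks` is an increasing list of positions in `i_C` whose subword is a reduced word for `w`. -/
noncomputable def IsSubwordIndices (n : ℕ) (w : ℤ → ℤ) (ks : List ℕ) : Prop :=
  ks.Chain' (· < ·) ∧ (∀ k ∈ ks, k < n ^ 2) ∧ ks.length = lenC n w ∧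
    wordProd (subwordLetters n ks) = w

/-- `ks = k_w` is the lexicographically minimal increasing list of positions of `i_C`
carrying a reduced word for `w`. -/
noncomputable def IsMinSubwordForW (n : ℕ) (w : ℤ → ℤ) (ks : List ℕ) : Prop :=
  IsSubwordIndices n w ks ∧ ∀ ks', IsSubwordIndices n w ks' → ¬ List.Lex (· < ·) ks' ks

/-- The skew pipe dream whose boxes are those of `SY_n` at positions **not** in `ks`;
for `ks = k_w` this is the skew pipe dream `D(w)`. -/
def Dskew (n : ℕ) (ks : List ℕ) : Finset (ℕ × ℕ) :=
  ((Finset.range (n ^ 2)).filter fun k => k ∉ ks).image (boxOfIdx n)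

/-! ## The pipe diagram `G(D)` and the signed permutation `w_D` -/

/-- A side of a box in the pipe diagram. -/
inductive PSide : Type
  | north | south | east | west
deriving DecidableEq

/-- The opposite side. -/
def oppSide : PSide → PSide
  | .north => .south
  | .south => .north
  | .east => .west
  | .west => .east

/-- Membership in the extended Gelfand–Tsetlin type diagram `SY_n^(ex)`:
column `j ≤ n` has rows `1, …, 2j` and column `n+1` has rows `1, …, 2n`. -/
def exMem (n : ℕ) (b : ℕ × ℕ) : Bool :=
  decide (1 ≤ b.1 ∧ 1 ≤ b.2 ∧ b.2 ≤ n + 1 ∧ b.1 ≤ min (2 * b.2) (2 * n))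

/-- The box `b` of the rearranged diagram `Ω(D)` is a crossing. -/
def isCross (n : ℕ) (D : Finset (ℕ × ℕ)) (b : ℕ × ℕ) : Bool :=
  decide (b.2 ≤ n) &&
    (if b.1 % 2 = 1 then decide (((b.1 + 1) / 2, b.2) ∈ D)
     else decide ((b.1 / 2, 2 * n + 1 - b.2) ∈ D))

/-- The empty box `b` is an elbow joint (as opposed to a reversed elbow joint). -/
def isElbow (n : ℕ) (b : ℕ × ℕ) : Bool :=
  decide ((b.2 ≤ n ∧ b.1 % 2 = 1) ∨ (b.2 = n + 1 ∧ b.1 % 2 = 0))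

/-- Given the side `s` from which a pipe enters the box `b`, the side from which it exits:
crossings go straight, elbows join `W–N` and `S–E`, reversed elbows join `N–E` and `W–S`. -/
def exitSide (n : ℕ) (D : Finset (ℕ × ℕ)) (b : ℕ × ℕ) (s : PSide) : PSide :=
  if isCross n D b then oppSide s
  else if isElbow n b then
    match s with
    | .west => .north
    | .north => .west
    | .south => .east
    | .east => .south
  else
    match s with
    | .north => .east
    | .east => .north
    | .west => .south
    | .south => .west

/-- The neighbouring box across the given side (rows increase downwards). -/
def stepBox (b : ℕ × ℕ) : PSide → ℕ × ℕ
  | .north => (b.1 - 1, b.2)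
  | .south => (b.1 + 1, b.2)
  | .east => (b.1, b.2 + 1)
  | .west => (b.1, b.2 - 1)

/-- Trace a pipe through the diagram: returns the list of visited boxes together with
the final box and the side from which the pipe leaves the diagram. -/
def tracePipe (n : ℕ) (D : Finset (ℕ × ℕ)) :
    ℕ → ℕ × ℕ → PSide → List (ℕ × ℕ) × ((ℕ × ℕ) × PSide)
  | 0, b, s => ([b], (b, exitSide n D b s))
  | fuel + 1, b, s =>
      let ex := exitSide n D b s
      let b' := stepBox b ex
      if exMem n b' then
        let r := tracePipe n D fuel b' (oppSide ex)
        (b :: r.1, r.2)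
      else ([b], (b, ex))

/-- The data of the pipe `ℓ_k` (for `1 ≤ k ≤ n`), entering the diagram from the west. -/
def pipeData (n : ℕ) (D : Finset (ℕ × ℕ)) (k : ℕ) : List (ℕ × ℕ) × ((ℕ × ℕ) × PSide) :=
  tracePipe n D (8 * (n + 2) * (n + 2)) (2 * (n - k) + 1, n - k + 1) PSide.west

/-- `v_D(k)`: the pipe `ℓ_k` exits at the top of the `(n + 1 - v_D(k))`-th column. -/
def vD (n : ℕ) (D : Finset (ℕ × ℕ)) (k : ℕ) : ℕ := n + 1 - ((pipeData n D k).2.1).2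

/-- The number of self-crossings of the pipe `ℓ_k`: the number of boxes it visits twice. -/
def selfCross (n : ℕ) (D : Finset (ℕ × ℕ)) (k : ℕ) : ℕ :=
  ((pipeData n D k).1.dedup.filter fun b => 2 ≤ (pipeData n D k).1.count b).length

/-- `v_D⁻¹(j)`. -/
def vDinv (n : ℕ) (D : Finset (ℕ × ℕ)) (j : ℕ) : ℕ :=
  ((((List.range n).map (· + 1)).find? fun k => vD n D k == j).getD 0)

/-- The signed permutation `w_D` read off from the pipe diagram `G(D)`:
`w_D(j) = (-1)^(sign(L_j)+1) · v_D⁻¹(j)`, where `sign(L_j)` is the number of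
self-crossings of the pipe `L_j = ℓ_{v_D⁻¹(j)}`. -/
def wD (n : ℕ) (D : Finset (ℕ × ℕ)) : ℤ → ℤ := fun x =>
  if 1 ≤ x.natAbs ∧ x.natAbs ≤ n then
    let k := vDinv n D x.natAbs
    let val : ℤ := (-1) ^ (selfCross n D k + 1) * (k : ℤ)
    if 0 < x then val else -val
  else x

/-- The set of reduced skew pipe dreams `D ⊆ SY_n` with `w_D = w`. -/
noncomputable def RSP (n : ℕ) (w : ℤ → ℤ) : Set (Finset (ℕ × ℕ)) :=
  {D | D ⊆ SY n ∧ D.card = n ^ 2 - lenC n (wD n D) ∧ wD n D = w}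

/-! ## Skew mitosis operators -/

/-- `b0` is the box `(p_{r₀}, q_{r₀})`: the index-maximal box of `SY_n` in the columns
`{n-j+1, n+j-1}` with `(p_{r₀}, q_{r₀}+1) ∉ D`. -/
def IsR0Box (n j : ℕ) (D : Finset (ℕ × ℕ)) (b0 : ℕ × ℕ) : Prop :=
  b0 ∈ SY n ∧ (b0.2 = n + 1 - j ∨ b0.2 = n + j - 1) ∧ (b0.1, b0.2 + 1) ∉ D ∧
    ∀ b ∈ SY n, (b.2 = n + 1 - j ∨ b.2 = n + j - 1) → (b.1, b.2 + 1) ∉ D → ¬ idxLt b0 b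

/-- The condition `(†)` under which the skew mitosis operators are nonempty, with `b0` the
removed box `(p_{r₀}, q_{r₀})`. -/
def MitosisDefined (n j : ℕ) (D : Finset (ℕ × ℕ)) (b0 : ℕ × ℕ) : Prop :=
  IsR0Box n j D b0 ∧
    ∀ b ∈ SY n, (b.2 = n + 1 - j ∨ b.2 = n + j - 1) → (idxLt b0 b ∨ b = b0) → b ∈ D

/-- A ladder move `L_{p,q}` with `q ∈ {n-j+1, n+j-1}`. -/
def ColLadderStep (n j : ℕ) (D D' : Finset (ℕ × ℕ)) : Prop :=
  ∃ rem add, (rem.2 = n + 1 - j ∨ rem.2 = n + j - 1) ∧ LadderMovable n D rem add ∧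
    D' = ladderResult D rem add

/-- A ladder move `L_{p,q}` with `q ∈ {n-j+1, n+j-1}` and `p < m`. -/
def ColLadderStepLt (n j m : ℕ) (D D' : Finset (ℕ × ℕ)) : Prop :=
  ∃ rem add, (rem.2 = n + 1 - j ∨ rem.2 = n + j - 1) ∧ rem.1 < m ∧
    LadderMovable n D rem add ∧ D' = ladderResult D rem add

/-- The skew mitosis-type operator `M_j`. -/
def Mset (n j : ℕ) (D : Finset (ℕ × ℕ)) : Set (Finset (ℕ × ℕ)) :=
  {E | ∃ b0, MitosisDefined n j D b0 ∧
    Relation.ReflTransGen (ColLadderStep n j) (D.erase b0) E}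

/-- `start_j^⊤(D)`. -/
noncomputable def startT (n j : ℕ) (D : Finset (ℕ × ℕ)) : ℕ :=
  sInf ({p | (p, n + 1 - j) ∈ SY n ∧ (p, n + 1 - j) ∉ D} ∪
        {q | ∃ p, q = p + 1 ∧ (p, n + j - 1) ∈ SY n ∧ (p, n + j - 1) ∉ D} ∪
        {n + 2 - j})

/-- The transposed skew mitosis operator `mitosis_j^⊤`. -/
noncomputable def mitosisT (n j : ℕ) (D : Finset (ℕ × ℕ)) : Set (Finset (ℕ × ℕ)) :=
  {E | ∃ b0, MitosisDefined n j D b0 ∧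
    Relation.ReflTransGen (ColLadderStepLt n j (startT n j D)) (D.erase b0) E}

/-! ## Generating functions -/

/-- `d(x, D)` for the fixed index `j`. -/
def dX (n j : ℕ) (D : Finset (ℕ × ℕ)) : ℕ :=
  (D.filter fun b => b.2 = n + 1 - j ∨ b.2 = n + j - 1).card

/-- `d(y, D)` for the fixed index `j`. -/
def dY (n j : ℕ) (D : Finset (ℕ × ℕ)) : ℕ :=
  (D.filter fun b => b.1 ≤ n + 1 - j ∧ (b.2 = n + 2 - j ∨ b.2 = n + j)).card

/-- The ladder-move closure `L(D₀)` of `D₀` as a finite set. -/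
noncomputable def LSet (n : ℕ) (ks : List ℕ) : Finset (Finset (ℕ × ℕ)) :=
  (SY n).powerset.filter fun D => InLadderClosure n (Dskew n ks) D

/-- The generating function `F(x,y) = Σ_{D ∈ L(D(w))} x^{d(x,D)} y^{d(y,D)}`
as a polynomial in `ℤ[x,y] = MvPolynomial (Fin 2) ℤ`. -/
noncomputable def Fpoly (n j : ℕ) (ks : List ℕ) : MvPolynomial (Fin 2) ℤ :=
  ∑ D ∈ LSet n ks, (MvPolynomial.X 0) ^ dX n j D * (MvPolynomial.X 1) ^ dY n j D

/-- The set `mitosis_j^⊤(L(D(w)))` as a finite set. -/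
noncomputable def MitUnion (n j : ℕ) (ks : List ℕ) : Finset (Finset (ℕ × ℕ)) :=
  (SY n).powerset.filter fun E =>
    ∃ D, InLadderClosure n (Dskew n ks) D ∧ E ∈ mitosisT n j D
lemma wordProd_singleton (l : ℕ) : wordProd [l] = sC l := by
  funext x; simp [wordProd]

lemma sC_self_ne (i : ℕ) (hi : 1 ≤ i) : sC i (i:ℤ) ≠ (i:ℤ) := by
  unfold sC; split_ifs with h1 h2 h3 h4 h5 h6 h7 <;> first | omega | tauto

lemma sC_lt_eval (a b : ℕ) (ha : 1 ≤ a) (hab : a < b) : sC a (b:ℤ) = (b:ℤ) := by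
  unfold sC; split_ifs with h1 h2 h3 h4 h5 h6 h7 <;> first | omega | tauto

lemma sC_self_eval (b : ℕ) (hb : 2 ≤ b) : sC b (b:ℤ) = (b:ℤ) - 1 := by
  unfold sC; split_ifs with h1 h2 h3 h4 h5 h6 h7 <;> first | omega | tauto

lemma sC_ne (a b : ℕ) (ha : 1 ≤ a) (hab : a < b) : sC a ≠ sC b := by
  intro h
  have hc := congrFun h (b:ℤ)
  rw [sC_lt_eval a b ha hab, sC_self_eval b (by omega)] at hc
  omega

lemma sC_inj {a b : ℕ} (ha : 1 ≤ a) (hb : 1 ≤ b) (h : sC a = sC b) : a = b := by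
  rcases lt_trichotomy a b with hlt | he | hgt
  · exact absurd h (sC_ne a b ha hlt)
  · exact he
  · exact absurd h.symm (sC_ne b a hb hgt)

lemma lenC_sC (n i : ℕ) (h1 : 1 ≤ i) (h2 : i ≤ n) : lenC n (sC i) = 1 := by
  have hmem : 1 ∈ {r | ∃ l : List ℕ, l.length = r ∧ (∀ k ∈ l, 1 ≤ k ∧ k ≤ n) ∧ wordProd l = sC i} :=
    ⟨[i], rfl, by simp [h1, h2], wordProd_singleton i⟩
  have h0 : 0 ∉ {r | ∃ l : List ℕ, l.length = r ∧ (∀ k ∈ l, 1 ≤ k ∧ k ≤ n) ∧ wordProd l = sC i} := by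
    rintro ⟨l, hl, -, hw⟩
    rw [List.length_eq_zero_iff.mp hl] at hw
    have := congrFun hw (i:ℤ)
    exact sC_self_ne i h1 (by simpa [wordProd] using this.symm)
  have hle := Nat.sInf_le hmem
  have hInf := Nat.sInf_mem ⟨1, hmem⟩
  unfold lenC
  by_contra hne
  have : sInf {r | ∃ l : List ℕ, l.length = r ∧ (∀ k ∈ l, 1 ≤ k ∧ k ≤ n) ∧ wordProd l = sC i} = 0 := by omega
  exact h0 (this ▸ hInf)

lemma iC_succ (n : ℕ) : iC (n+1) = iC n ++ cBlock (n+1) := by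
  simp [iC, List.range_succ]

lemma cBlock_length (m : ℕ) : (cBlock m).length = 2*m - 1 := by
  simp [cBlock]; omega

lemma iC_length (n : ℕ) : (iC n).length = n^2 := by
  induction n with
  | zero => rfl
  | succ n ih =>
    rw [iC_succ, List.length_append, ih, cBlock_length]
    have e : (n+1)^2 = n^2 + 2*n+1 := by ring
    have e2 : 2*(n+1)-1 = 2*n+1 := by omega
    rw [e2]; ring

lemma mem_cBlock (m x : ℕ) (hx : x ∈ cBlock m) : 1 ≤ x ∧ x ≤ m := by
  simp [cBlock] at hx
  rcases hx with ⟨t, ht, rfl⟩ | ⟨t, ht, rfl⟩ <;> omega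

lemma mem_iC {n x : ℕ} (hx : x ∈ iC n) : 1 ≤ x ∧ x ≤ n := by
  induction n with
  | zero => simp [iC] at hx
  | succ n ih =>
    rw [iC_succ, List.mem_append] at hx
    rcases hx with h | h
    · have := ih h; omega
    · exact mem_cBlock _ _ h

lemma iC_prefix {j n : ℕ} (h : j ≤ n) : ∃ t, iC n = iC j ++ t := by
  induction n with
  | zero =>
    have : j = 0 := by omega
    subst this; exact ⟨[], by simp⟩
  | succ n ih =>
    rcases Nat.eq_or_lt_of_le h with rfl | h'
    · exact ⟨[], by simp⟩
    · obtain ⟨t, ht⟩ := ih (by omega)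
      exact ⟨t ++ cBlock (n+1), by rw [iC_succ, ht, List.append_assoc]⟩

lemma cBlock_cons (m : ℕ) : ∃ t, cBlock (m+1) = (m+1) :: t := by
  rw [cBlock, List.range_succ_eq_map, List.map_cons, Nat.sub_zero, List.cons_append]
  exact ⟨_, rfl⟩

lemma iC_getD_sq (n i : ℕ) (h1 : 1 ≤ i) (h2 : i ≤ n) : (iC n).getD ((i-1)^2) 0 = i := by
  obtain ⟨i', rfl⟩ : ∃ i', i = i' + 1 := ⟨i - 1, by omega⟩
  obtain ⟨t, ht⟩ := iC_prefix h2 (j := i'+1)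
  obtain ⟨s, hs⟩ := cBlock_cons i'
  rw [ht, iC_succ, List.append_assoc, List.getD_append_right, iC_length]
  · simp [hs]
  · rw [iC_length]; simp

lemma iC_getD_lt (n i k : ℕ) (h1 : 1 ≤ i) (h2 : i ≤ n) (hk : k < (i-1)^2) :
    (iC n).getD k 0 ≤ i - 1 := by
  obtain ⟨t, ht⟩ := iC_prefix (show i - 1 ≤ n by omega)
  rw [ht, List.getD_append _ _ _ _ (by rw [iC_length]; exact hk),
    List.getD_eq_getElem _ _ (by rw [iC_length]; exact hk)]
  exact (mem_iC (List.getElem_mem _)).2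

lemma mem_SY {n : ℕ} {b : ℕ × ℕ} :
    b ∈ SY n ↔ 1 ≤ b.1 ∧ b.1 ≤ n ∧ b.1 ≤ b.2 ∧ b.1 + b.2 ≤ 2*n := by
  simp only [SY, Finset.mem_filter, Finset.mem_product, Finset.mem_Icc]
  omega

lemma boxOfIdx_spec {n k : ℕ} (hk : k < n^2) :
    ∃ m t, Nat.sqrt k = m ∧ m < n ∧ t ≤ 2*m ∧ k = m*m + t ∧
      boxOfIdx n k = (n - m, n + m - t) := by
  set m := Nat.sqrt k with hm
  have hmn : m < n := Nat.sqrt_lt'.mpr hk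
  have h1 : m * m ≤ k := Nat.sqrt_le k
  obtain ⟨t, ht⟩ := Nat.exists_eq_add_of_le h1
  have h2 : k < (m+1) * (m+1) := Nat.lt_succ_sqrt k
  have h3 : (m+1)*(m+1) = m*m + (2*m+1) := by ring
  have ht2 : t ≤ 2*m := by
    rw [ht, h3] at h2
    have := Nat.lt_of_add_lt_add_left h2
    omega
  refine ⟨m, t, rfl, hmn, ht2, ht, ?_⟩
  have hsub : k - m * m = t := by rw [ht]; exact Nat.add_sub_cancel_left _ _
  show (n + 1 - (m+1), n + (m+1) - 1 - (k - (m+1-1) * (m+1-1))) = (n - m, n + m - t)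
  rw [Nat.add_sub_cancel, hsub, Prod.mk.injEq]
  constructor <;> omega

lemma boxOfIdx_mem {n k : ℕ} (hk : k < n^2) : boxOfIdx n k ∈ SY n := by
  obtain ⟨m, t, -, hmn, ht2, -, hbox⟩ := boxOfIdx_spec hk
  rw [hbox, mem_SY]
  constructor
  · omega
  constructor
  · omega
  constructor
  · simp only; omega
  · simp only; omega

lemma boxOfIdx_inj {n k k' : ℕ} (hk : k < n^2) (hk' : k' < n^2)
    (h : boxOfIdx n k = boxOfIdx n k') : k = k' := by
  obtain ⟨m, t, -, hmn, ht2, hkt, hbox⟩ := boxOfIdx_spec hk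
  obtain ⟨m', t', -, hmn', ht2', hkt', hbox'⟩ := boxOfIdx_spec hk'
  rw [hbox, hbox', Prod.mk.injEq] at h
  have hmm : m = m' := by omega
  subst hmm
  have : t = t' := by omega
  omega

lemma boxOfIdx_surj {n : ℕ} {b : ℕ × ℕ} (hb : b ∈ SY n) : ∃ k < n^2, boxOfIdx n k = b := by
  rw [mem_SY] at hb
  obtain ⟨hb1, hb2, hb3, hb4⟩ := hb
  set m := n - b.1 with hm
  set t := 2*n - b.1 - b.2 with htdef
  refine ⟨m*m + t, ?_, ?_⟩
  · have h1 : t ≤ 2*m := by omega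
    have : m*m + t < (m+1)*(m+1) := by nlinarith
    have h2 : m + 1 ≤ n := by omega
    calc m*m+t < (m+1)*(m+1) := this
      _ ≤ n * n := Nat.mul_le_mul h2 h2
      _ = n^2 := (sq n).symm
  · have hsq : Nat.sqrt (m*m + t) = m := Nat.sqrt_add_eq m (by omega)
    show (n + 1 - (Nat.sqrt (m*m+t) + 1), n + (Nat.sqrt (m*m+t) + 1) - 1 -
      (m*m + t - (Nat.sqrt (m*m+t) + 1 - 1) * (Nat.sqrt (m*m+t) + 1 - 1))) = b
    rw [hsq, Nat.add_sub_cancel]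
    have hsub : m*m + t - m*m = t := Nat.add_sub_cancel_left _ _
    rw [hsub]
    have : b = (b.1, b.2) := rfl
    rw [this, Prod.mk.injEq]
    constructor <;> omega

lemma Dskew_singleton (n k0 : ℕ) (hk0 : k0 < n^2) :
    Dskew n [k0] = (SY n).erase (boxOfIdx n k0) := by
  ext b
  simp only [Dskew, Finset.mem_image, Finset.mem_filter, Finset.mem_range,
    Finset.mem_erase, List.mem_singleton]
  constructor
  · rintro ⟨k, ⟨hk, hne⟩, rfl⟩
    exact ⟨fun he => hne (boxOfIdx_inj hk hk0 he), boxOfIdx_mem hk⟩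
  · rintro ⟨hne, hb⟩
    obtain ⟨k, hk, rfl⟩ := boxOfIdx_surj hb
    exact ⟨k, ⟨hk, fun he => hne (by rw [he])⟩, rfl⟩

lemma boxOfIdx_sq (n i : ℕ) (h1 : 1 ≤ i) (h2 : i ≤ n) :
    boxOfIdx n ((i-1)^2) = (n + 1 - i, n + i - 1) := by
  have hsq : Nat.sqrt ((i-1)^2) = i - 1 := Nat.sqrt_eq' (i-1)
  show (n + 1 - (Nat.sqrt ((i-1)^2) + 1), n + (Nat.sqrt ((i-1)^2) + 1) - 1 -
    ((i-1)^2 - (Nat.sqrt ((i-1)^2) + 1 - 1) * (Nat.sqrt ((i-1)^2) + 1 - 1))) = _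
  rw [hsq, Nat.add_sub_cancel]
  have : (i-1)^2 - (i-1)*(i-1) = 0 := by rw [sq]; omega
  rw [this, Nat.sub_zero, Prod.mk.injEq]
  constructor <;> omega

/-- `D(s_i) = SY_n ∖ {(n-i+1, n+i-1)}`, no ladder move is defined on it, and
`L(D(s_i)) = {D(s_i)}`. -/
theorem Dskew_simple_reflection (n i : ℕ) (h1 : 1 ≤ i) (h2 : i ≤ n) (ks : List ℕ)
    (hks : IsMinSubwordForW n (sC i) ks) :
    Dskew n ks = (SY n).erase (n + 1 - i, n + i - 1) ∧
    (∀ rem add, ¬ LadderMovable n (Dskew n ks) rem add) ∧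
    (∀ D, InLadderClosure n (Dskew n ks) D → D = Dskew n ks) := by
  obtain ⟨⟨hchain, hbound, hlen, hprod⟩, hmin⟩ := hks
  rw [lenC_sC n i h1 h2] at hlen
  obtain ⟨k, rfl⟩ := List.length_eq_one_iff.mp hlen
  have hk : k < n^2 := hbound k (by simp)
  have hki : (iC n).getD k 0 = i := by
    have hp1 : wordProd [(iC n).getD k 0] = sC i := by
      simpa [subwordLetters] using hprod
    rw [wordProd_singleton] at hp1
    have hlmem : (iC n).getD k 0 ∈ iC n := by
      rw [List.getD_eq_getElem _ _ (by rw [iC_length]; exact hk)]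
      exact List.getElem_mem _
    exact sC_inj (mem_iC hlmem).1 h1 hp1
  have hsqlt : (i-1)^2 < n^2 := by
    have : i - 1 < n := by omega
    exact Nat.pow_lt_pow_left this (by norm_num)
  have hk_ge : (i-1)^2 ≤ k := by
    by_contra hlt
    push_neg at hlt
    have := iC_getD_lt n i k h1 h2 hlt
    omega
  have hk_le : k ≤ (i-1)^2 := by
    have hvalid : IsSubwordIndices n (sC i) [(i-1)^2] := by
      refine ⟨List.isChain_singleton _, by simpa using hsqlt, ?_, ?_⟩
      · rw [lenC_sC n i h1 h2]; rfl
      · simp only [subwordLetters, List.map_cons, List.map_nil]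
        rw [iC_getD_sq n i h1 h2, wordProd_singleton]
    have hnl := hmin _ hvalid
    by_contra hgt
    push_neg at hgt
    exact hnl (List.Lex.rel hgt)
  have hkk : k = (i-1)^2 := le_antisymm hk_le hk_ge
  subst hkk
  have hD : Dskew n [(i-1)^2] = (SY n).erase (n + 1 - i, n + i - 1) := by
    rw [Dskew_singleton n _ hsqlt, boxOfIdx_sq n i h1 h2]
  refine ⟨hD, ?_, ?_⟩
  · intro rem add hlm
    obtain ⟨-, -, h3, h4, h5, h6, -, -, -⟩ := hlm
    rw [hD] at h5 h6
    have ha : add = (n+1-i, n+i-1) := by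
      by_contra hne; exact h5 (Finset.mem_erase.mpr ⟨hne, h3⟩)
    have ha2 : (add.1, add.2+1) = ((n+1-i : ℕ), (n+i-1 : ℕ)) := by
      by_contra hne; exact h6 (Finset.mem_erase.mpr ⟨hne, h4⟩)
    have e1 : add.2 = n+i-1 := congrArg Prod.snd ha
    have e2 : add.2 + 1 = n+i-1 := congrArg Prod.snd ha2
    omega
  · intro D hD'
    rcases Relation.ReflTransGen.cases_head hD' with he | ⟨c, hc, -⟩
    · exact he.symm
    · obtain ⟨rem, add, hlm, -⟩ := hc
      exfalso
      obtain ⟨-, -, h3, h4, h5, h6, -, -, -⟩ := hlm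
      rw [hD] at h5 h6
      have ha : add = (n+1-i, n+i-1) := by
        by_contra hne; exact h5 (Finset.mem_erase.mpr ⟨hne, h3⟩)
      have ha2 : (add.1, add.2+1) = ((n+1-i : ℕ), (n+i-1 : ℕ)) := by
        by_contra hne; exact h6 (Finset.mem_erase.mpr ⟨hne, h4⟩)
      have e1 : add.2 = n+i-1 := congrArg Prod.snd ha
      have e2 : add.2 + 1 = n+i-1 := congrArg Prod.snd ha2
      omega
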